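/- Let δ > 0. There exists a constant C > 0 such that for every real b with 0 < b < 1 and every fixed h > 0, ∫_{-∞}^{+∞} e^{-h|x|}(1+|x|)/|1 − b·e^{ix}|^{1+δ} dx ≤ C/(1−b)^{δ}. -/

import Mathlib

open MeasureTheory Real Set intervalIntegral


lemma aux_integrable_exp_abs {c : ℝ} (hc : 0 < c) :
    Integrable (fun x : ℝ => Real.exp (-(c * |x|))) := by
  have h1 : IntegrableOn (fun x : ℝ => Real.exp (-(c * |x|))) (Ioi (0:ℝ)) := by
    refine (exp_neg_integrableOn_Ioi 0 hc).congr_fun (fun x hx => ?_) measurableSet_Ioi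
    rw [abs_of_pos hx]
    ring_nf
  have hmp : MeasurePreserving (fun x : ℝ => -x) volume volume :=
    Measure.measurePreserving_neg _
  have hme : MeasurableEmbedding (fun x : ℝ => -x) :=
    (Homeomorph.neg ℝ).measurableEmbedding
  have h2 : IntegrableOn (fun x : ℝ => Real.exp (-(c * |x|))) (Iio (0:ℝ)) := by
    have h3 := (hmp.integrableOn_comp_preimage hme).2 h1
    have hpre : (fun x : ℝ => -x) ⁻¹' (Ioi 0) = Iio 0 := by
      ext y; simp
    rw [hpre] at h3
    refine h3.congr_fun (fun x _ => ?_) measurableSet_Iio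
    simp [Function.comp, abs_neg]
  rw [← integrableOn_univ, ← Iio_union_Ici (a := (0:ℝ))]
  exact h2.union ((integrableOn_Ici_iff_integrableOn_Ioi (by simp)).2 h1)

lemma aux_summable {c : ℝ} (hc : 0 < c) :
    Summable (fun k : ℤ => Real.exp (-(c * |(k : ℝ)|))) := by
  have hnat : Summable (fun n : ℕ => Real.exp (-(c * n))) := by
    have : ∀ n : ℕ, Real.exp (-(c * n)) = (Real.exp (-c)) ^ n := by
      intro n
      rw [← Real.exp_nat_mul]
      ring_nf
    simpa [this] using summable_geometric_of_lt_one (Real.exp_pos (-c)).le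
      (Real.exp_lt_one_iff.2 (by linarith))
  refine Summable.of_nat_of_neg ?_ ?_ <;>
    · refine hnat.congr fun n => ?_
      simp [abs_of_nonneg]


lemma aux_max_lower {a t : ℝ} (ha : 0 ≤ a) (ht : 0 ≤ t) : (a + t) / 8 ≤ max a (t / 4) := by
  rcases le_total a (t / 4) with h | h
  · rw [max_eq_right h]; linarith
  · rw [max_eq_left h]; linarith

lemma aux_J {δ a : ℝ} (hδ : 0 < δ) (ha : 0 < a) :
    ∫ x in (0:ℝ)..π, (max a (|Real.sin x| / 2)) ^ (-(1+δ)) ≤ 2 * 8 ^ (1+δ) / δ * a ^ (-δ) := by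
  set ψ : ℝ → ℝ := fun x => 8 ^ (1+δ) * (a + x) ^ (-(1+δ)) with hψ
  have hMpos : ∀ x : ℝ, 0 < max a (|Real.sin x| / 2) := fun x => lt_max_of_lt_left ha
  have hMcont : Continuous fun x : ℝ => max a (|Real.sin x| / 2) :=
    continuous_const.max ((Real.continuous_sin.abs).div_const 2)
  have hmcont : Continuous fun x : ℝ => (max a (|Real.sin x| / 2)) ^ (-(1+δ)) :=
    hMcont.rpow_const fun x => Or.inl (hMpos x).ne'
  have hkey : ∀ y ∈ Icc (0:ℝ) (π/2), (max a (|Real.sin y| / 2)) ^ (-(1+δ)) ≤ ψ y := by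
    intro y hy
    obtain ⟨hy0, hy2⟩ := hy
    have hπ : 0 < π := Real.pi_pos
    have hsin : y / 2 ≤ |Real.sin y| := by
      have h1 : 2 / π * y ≤ Real.sin y := Real.mul_le_sin hy0 hy2
      have h2 : y / 2 ≤ 2 / π * y := by
        have h4 : π ≤ 4 := Real.pi_le_four
        have h5 : (1:ℝ)/2 ≤ 2 / π := by rw [le_div_iff₀ hπ]; linarith
        nlinarith [mul_nonneg (sub_nonneg.2 h5) hy0]
      have := le_abs_self (Real.sin y)
      linarith
    have hlow : (a + y) / 8 ≤ max a (|Real.sin y| / 2) := by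
      have h4 : y / 4 ≤ |Real.sin y| / 2 := by linarith
      exact le_trans (aux_max_lower ha.le hy0) (max_le_max le_rfl h4)
    have hbase : (0:ℝ) < (a + y) / 8 := by positivity
    have h5 : (max a (|Real.sin y| / 2)) ^ (-(1+δ)) ≤ ((a + y)/8) ^ (-(1+δ)) :=
      Real.rpow_le_rpow_of_nonpos hbase hlow (by linarith)
    refine h5.trans (le_of_eq ?_)
    rw [hψ]
    rw [Real.div_rpow (by positivity) (by norm_num : (0:ℝ) ≤ 8)]
    rw [Real.rpow_neg (by norm_num : (0:ℝ) ≤ 8)]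
    field_simp
  have hsum : ∀ x ∈ Icc (0:ℝ) π, (max a (|Real.sin x| / 2)) ^ (-(1+δ)) ≤ ψ x + ψ (π - x) := by
    intro x hx
    obtain ⟨hx0, hxπ⟩ := hx
    have hψnn : ∀ t : ℝ, 0 ≤ t → 0 ≤ ψ t := by
      intro t ht; rw [hψ]; positivity
    rcases le_total x (π/2) with h | h
    · have := hkey x ⟨hx0, h⟩
      have h2 := hψnn (π - x) (by linarith)
      linarith
    · have hmem : π - x ∈ Icc (0:ℝ) (π/2) := ⟨by linarith, by linarith⟩
      have h3 := hkey (π - x) hmem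
      rw [Real.sin_pi_sub] at h3
      have h2 := hψnn x hx0
      linarith
  have hπ : (0:ℝ) ≤ π := Real.pi_pos.le
  have hψc : ContinuousOn ψ (Icc (0:ℝ) π) := by
    refine ContinuousOn.mul continuousOn_const ?_
    refine ContinuousOn.rpow_const (by fun_prop) fun x hx => Or.inl ?_
    have : (0:ℝ) ≤ x := hx.1
    positivity
  have hψint : IntervalIntegrable ψ volume 0 π := by
    refine ContinuousOn.intervalIntegrable ?_
    rwa [uIcc_of_le hπ]
  have hψint2 : IntervalIntegrable (fun x => ψ (π - x)) volume 0 π := by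
    refine ContinuousOn.intervalIntegrable ?_
    rw [uIcc_of_le hπ]
    refine hψc.comp (by fun_prop) ?_
    intro x hx
    exact ⟨by linarith [hx.2], by linarith [hx.1]⟩
  have hmint : IntervalIntegrable (fun x => (max a (|Real.sin x| / 2)) ^ (-(1+δ))) volume 0 π :=
    hmcont.intervalIntegrable _ _
  have hcomp : ∫ x in (0:ℝ)..π, (max a (|Real.sin x| / 2)) ^ (-(1+δ))
      ≤ ∫ x in (0:ℝ)..π, (ψ x + ψ (π - x)) :=
    intervalIntegral.integral_mono_on hπ hmint (hψint.add hψint2) hsum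
  have hrefl : ∫ x in (0:ℝ)..π, ψ (π - x) = ∫ x in (0:ℝ)..π, ψ x := by
    rw [intervalIntegral.integral_comp_sub_left ψ π]
    norm_num
  have hval : ∫ x in (0:ℝ)..π, (a + x) ^ (-(1+δ)) ≤ a ^ (-δ) / δ := by
    have h1 := intervalIntegral.integral_comp_add_left (a := 0) (b := π)
      (fun y => y ^ (-(1+δ))) a
    simp only [add_zero] at h1
    rw [h1, integral_rpow (Or.inr ⟨?_, ?_⟩)]
    · have hδ' : -(1+δ) + 1 = -δ := by ring
      rw [hδ']
      have h2 : (0:ℝ) ≤ (a + π) ^ (-δ) := Real.rpow_nonneg (by positivity) _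
      have heq : ((a+π) ^ (-δ) - a ^ (-δ)) / (-δ)
          = (a ^ (-δ) - (a+π) ^ (-δ)) / δ := by
        rw [div_neg, ← neg_div, neg_sub]
      rw [heq]
      gcongr
      linarith
    · intro hcon
      have : (1:ℝ) + δ = 1 := by linarith [neg_injective hcon]
      linarith
    · rw [uIcc_of_le (by linarith)]
      intro hcon
      exact absurd hcon.1 (by linarith)
  calc ∫ x in (0:ℝ)..π, (max a (|Real.sin x| / 2)) ^ (-(1+δ))
      ≤ ∫ x in (0:ℝ)..π, (ψ x + ψ (π - x)) := hcomp
    _ = (∫ x in (0:ℝ)..π, ψ x) + ∫ x in (0:ℝ)..π, ψ (π - x) :=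
        intervalIntegral.integral_add hψint hψint2
    _ = 2 * ∫ x in (0:ℝ)..π, ψ x := by rw [hrefl]; ring
    _ = 2 * (8 ^ (1+δ) * ∫ x in (0:ℝ)..π, (a + x) ^ (-(1+δ))) := by
        rw [hψ, intervalIntegral.integral_const_mul]
    _ ≤ 2 * (8 ^ (1+δ) * (a ^ (-δ) / δ)) := by
        have h8 : (0:ℝ) ≤ 8 ^ (1+δ) := Real.rpow_nonneg (by norm_num) _
        nlinarith [hval]
    _ = 2 * 8 ^ (1+δ) / δ * a ^ (-δ) := by ring

lemma aux_line {δ a c : ℝ} (hδ : 0 < δ) (ha : 0 < a) (hc : 0 < c) :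
    ∫ x : ℝ, Real.exp (-(c * |x|)) * (max a (|Real.sin x| / 2)) ^ (-(1+δ))
      ≤ Real.exp (c * π) * (∑' k : ℤ, Real.exp (-(c * π * |(k:ℝ)|)))
        * (2 * 8 ^ (1+δ) / δ * a ^ (-δ)) := by
  have hπ : (0:ℝ) < π := Real.pi_pos
  set m : ℝ → ℝ := fun x => (max a (|Real.sin x| / 2)) ^ (-(1+δ)) with hm
  set F : ℝ → ℝ := fun x => Real.exp (-(c * |x|)) * m x with hFdef
  have hMpos : ∀ x : ℝ, 0 < max a (|Real.sin x| / 2) := fun x => lt_max_of_lt_left ha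
  have hMcont : Continuous fun x : ℝ => max a (|Real.sin x| / 2) :=
    continuous_const.max ((Real.continuous_sin.abs).div_const 2)
  have hmcont : Continuous m := hMcont.rpow_const fun x => Or.inl (hMpos x).ne'
  have hmnn : ∀ x, 0 ≤ m x := fun x => Real.rpow_nonneg (hMpos x).le _
  have hma : ∀ x, m x ≤ a ^ (-(1+δ)) := fun x =>
    Real.rpow_le_rpow_of_nonpos ha (le_max_left _ _) (by linarith)
  have hecont : Continuous fun x : ℝ => Real.exp (-(c * |x|)) := by fun_prop
  have hF : Integrable F := by
    refine Integrable.mono' ((aux_integrable_exp_abs hc).const_mul (a ^ (-(1+δ))))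
      (hecont.mul hmcont).aestronglyMeasurable (Filter.Eventually.of_forall fun x => ?_)
    rw [Real.norm_eq_abs, abs_of_nonneg (mul_nonneg (Real.exp_pos _).le (hmnn x)), mul_comm]
    exact mul_le_mul_of_nonneg_right (hma x) (Real.exp_pos _).le
  have hper : Function.Periodic m π := by
    intro x
    simp only [hm, Real.sin_add_pi, abs_neg]
  -- decomposition of ℝ
  set s : ℤ → Set ℝ := fun k => Ioc ((k:ℝ) * π) (((k:ℝ) + 1) * π) with hs
  have hsU : ⋃ k, s k = univ := by
    have h := iUnion_Ioc_add_zsmul hπ (0:ℝ)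
    simp only [zero_add, zsmul_eq_mul, Int.cast_add, Int.cast_one] at h
    exact h
  have hdisj : Pairwise (Function.onFun Disjoint s) := by
    have h := pairwise_disjoint_Ioc_add_zsmul (0:ℝ) π
    simp only [zero_add, zsmul_eq_mul, Int.cast_add, Int.cast_one] at h
    exact h
  have hHasSum : HasSum (fun k => ∫ x in s k, F x) (∫ x, F x) := by
    have h := hasSum_integral_iUnion (fun k : ℤ => measurableSet_Ioc) hdisj
      (by rw [hsU]; exact hF.integrableOn)
    rwa [hsU, setIntegral_univ] at h
  set J : ℝ := ∫ x in (0:ℝ)..π, m x with hJ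
  have hJnn : 0 ≤ J := by
    rw [hJ, intervalIntegral.integral_of_le hπ.le]
    exact setIntegral_nonneg measurableSet_Ioc fun x _ => hmnn x
  have hterm : ∀ k : ℤ, (∫ x in s k, F x)
      ≤ (Real.exp (c * π) * Real.exp (-(c * π * |(k:ℝ)|))) * J := by
    intro k
    set B : ℝ := Real.exp (c * π) * Real.exp (-(c * π * |(k:ℝ)|)) with hB
    have hBp : 0 < B := mul_pos (Real.exp_pos _) (Real.exp_pos _)
    have hmono : ∀ x ∈ s k, F x ≤ B * m x := by
      intro x hx
      obtain ⟨hx1, hx2⟩ := hx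
      have habs : π * |(k:ℝ)| - π ≤ |x| := by
        rcases le_or_gt 0 (k:ℝ) with h0 | h0
        · rw [abs_of_nonneg h0]
          have hx0 : 0 ≤ x := le_trans (by positivity) hx1.le
          rw [abs_of_nonneg hx0]
          nlinarith
        · have hk1 : (k:ℝ) ≤ -1 := by
            have hk : k < 0 := by exact_mod_cast h0
            have : k ≤ -1 := by omega
            exact_mod_cast this
          rw [abs_of_neg h0]
          have hx0 : x ≤ 0 := le_trans hx2 (by nlinarith)
          rw [abs_of_nonpos hx0]
          nlinarith
      have hexp : Real.exp (-(c * |x|)) ≤ B := by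
        rw [hB, ← Real.exp_add]
        apply Real.exp_le_exp.2
        nlinarith [mul_le_mul_of_nonneg_left habs hc.le]
      calc F x = Real.exp (-(c * |x|)) * m x := rfl
        _ ≤ B * m x := mul_le_mul_of_nonneg_right hexp (hmnn x)
    have hint1 : IntegrableOn F (s k) := hF.integrableOn
    have hint2 : IntegrableOn (fun x => B * m x) (s k) :=
      ((continuous_const.mul hmcont)).integrableOn_Ioc
    calc (∫ x in s k, F x) ≤ ∫ x in s k, B * m x :=
          setIntegral_mono_on hint1 hint2 measurableSet_Ioc hmono
      _ = B * ∫ x in s k, m x := by rw [MeasureTheory.integral_const_mul]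
      _ = B * J := by
          congr 1
          have h1 : ((k:ℝ) + 1) * π = (k:ℝ) * π + π := by ring
          rw [hs]
          simp only []
          rw [h1, ← intervalIntegral.integral_of_le (by nlinarith : (k:ℝ)*π ≤ (k:ℝ)*π + π)]
          rw [hper.intervalIntegral_add_eq ((k:ℝ)*π) 0, zero_add]
  have hsummb : Summable (fun k : ℤ =>
      (Real.exp (c * π) * Real.exp (-(c * π * |(k:ℝ)|))) * J) := by
    have := aux_summable (mul_pos hc hπ)
    exact (this.mul_left _).mul_right _
  have h1 : ∫ x, F x ≤ ∑' k : ℤ, (Real.exp (c * π) * Real.exp (-(c * π * |(k:ℝ)|))) * J := by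
    rw [← hHasSum.tsum_eq]
    exact Summable.tsum_le_tsum hterm hHasSum.summable hsummb
  have h2 : ∑' k : ℤ, (Real.exp (c * π) * Real.exp (-(c * π * |(k:ℝ)|))) * J
      = Real.exp (c * π) * (∑' k : ℤ, Real.exp (-(c * π * |(k:ℝ)|))) * J := by
    rw [tsum_mul_right, tsum_mul_left]
  have hSnn : 0 ≤ ∑' k : ℤ, Real.exp (-(c * π * |(k:ℝ)|)) :=
    tsum_nonneg fun k => (Real.exp_pos _).le
  calc ∫ x, F x ≤ Real.exp (c * π) * (∑' k : ℤ, Real.exp (-(c * π * |(k:ℝ)|))) * J := by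
        rw [← h2]; exact h1
    _ ≤ _ := by
        apply mul_le_mul_of_nonneg_left (aux_J hδ ha)
        positivity

set_option maxHeartbeats 1600000 in
theorem integral_exp_decay_div_abs_pow (δ h : ℝ) (hδ : 0 < δ) (hh : 0 < h) :
    ∃ C > 0, ∀ b : ℝ, 0 < b → b < 1 →
      (∫ x : ℝ, Real.exp (-h * |x|) * (1 + |x|)
          / ‖1 - (b : ℂ) * Complex.exp (Complex.I * (x : ℂ))‖ ^ (1 + δ))
        ≤ C / (1 - b) ^ δ := by
  have hπ : (0:ℝ) < π := Real.pi_pos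
  set c : ℝ := h / 2 with hcdef
  have hc : 0 < c := by positivity
  set K : ℝ := 1 + 2 / h with hKdef
  have hKpos : 0 < K := by positivity
  set E : ℝ := ∫ x : ℝ, Real.exp (-(c * |x|)) with hE
  have hEnn : 0 ≤ E := integral_nonneg fun x => (Real.exp_pos _).le
  set S : ℝ := ∑' k : ℤ, Real.exp (-(c * π * |(k:ℝ)|)) with hS
  have hSnn : 0 ≤ S := tsum_nonneg fun k => (Real.exp_pos _).le
  set C₁ : ℝ := 2 * 8 ^ (1+δ) / δ with hC₁
  have h8pow : 0 < (8:ℝ) ^ (1+δ) := Real.rpow_pos_of_pos (by norm_num) _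
  have hC₁nn : 0 ≤ C₁ := by rw [hC₁]; positivity
  have h2pow : 0 < (2:ℝ) ^ (1+δ) := Real.rpow_pos_of_pos two_pos _
  set C : ℝ := 2 ^ (1+δ) * K * (E + 1) + K * Real.exp (c * π) * S * C₁ + 1 with hC
  have ht1 : 0 ≤ 2 ^ (1+δ) * K * (E + 1) := by
    apply mul_nonneg (mul_nonneg h2pow.le hKpos.le); linarith
  have ht2 : 0 ≤ K * Real.exp (c * π) * S * C₁ :=
    mul_nonneg (mul_nonneg (mul_nonneg hKpos.le (Real.exp_pos _).le) hSnn) hC₁nn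
  have hCpos : 0 < C := by rw [hC]; linarith
  refine ⟨C, hCpos, ?_⟩
  intro b hb0 hb1
  have ha : 0 < 1 - b := by linarith
  have hapow : 0 < (1 - b) ^ δ := Real.rpow_pos_of_pos ha δ
  have hpow_le_one : (1 - b) ^ δ ≤ 1 := Real.rpow_le_one ha.le (by linarith) hδ.le
  -- denominator lower bounds
  have hd1 : ∀ x : ℝ, 1 - b ≤ ‖1 - (b : ℂ) * Complex.exp (Complex.I * (x : ℂ))‖ := by
    intro x
    have h1 : ‖(b : ℂ) * Complex.exp (Complex.I * (x : ℂ))‖ = b := by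
      simp [map_mul, Complex.norm_exp, Complex.mul_re, _root_.abs_of_nonneg hb0.le]
    calc 1 - b = ‖(1:ℂ)‖ - ‖(b:ℂ) * Complex.exp (Complex.I * (x:ℂ))‖ := by
          rw [h1, norm_one]
      _ ≤ _ := by
          simpa using
            norm_sub_norm_le (1 : ℂ) ((b:ℂ) * Complex.exp (Complex.I * (x:ℂ)))
  have hd2 : ∀ x : ℝ, b * |Real.sin x|
      ≤ ‖1 - (b : ℂ) * Complex.exp (Complex.I * (x : ℂ))‖ := by
    intro x
    have him : (1 - (b : ℂ) * Complex.exp (Complex.I * (x : ℂ))).im = -(b * Real.sin x) := by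
      rw [mul_comm Complex.I]
      simp [Complex.exp_mul_I, Complex.mul_im, Complex.sin_ofReal_re, Complex.cos_ofReal_im,
        Complex.sin_ofReal_im, Complex.cos_ofReal_re]
    have hi := Complex.abs_im_le_norm (1 - (b : ℂ) * Complex.exp (Complex.I * (x : ℂ)))
    rw [him, abs_neg, abs_mul, _root_.abs_of_nonneg hb0.le] at hi
    exact hi
  have hDpos : ∀ x : ℝ,
      0 < ‖1 - (b : ℂ) * Complex.exp (Complex.I * (x : ℂ))‖ :=
    fun x => lt_of_lt_of_le ha (hd1 x)
  have hf0 : ∀ x : ℝ, 0 ≤ Real.exp (-h * |x|) * (1 + |x|)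
      / ‖1 - (b : ℂ) * Complex.exp (Complex.I * (x : ℂ))‖ ^ (1 + δ) := by
    intro x
    have := abs_nonneg x
    apply div_nonneg (by positivity) (Real.rpow_nonneg (norm_nonneg _) _)
  -- weight bound
  have hw : ∀ x : ℝ, Real.exp (-h * |x|) * (1 + |x|) ≤ K * Real.exp (-(c * |x|)) := by
    intro x
    have hx0 : 0 ≤ |x| := abs_nonneg x
    have h1 : 1 + c * |x| ≤ Real.exp (c * |x|) := by
      have := Real.add_one_le_exp (c * |x|)
      linarith
    have hhc : (2 / h) * (h / 2) = 1 := by field_simp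
    have he : 1 + |x| ≤ K * Real.exp (c * |x|) := by
      calc 1 + |x| ≤ K * (1 + c * |x|) := by
            rw [hKdef, hcdef]
            nlinarith [mul_nonneg (by positivity : (0:ℝ) ≤ 2 / h) hx0,
              mul_nonneg (le_of_lt hh) hx0]
        _ ≤ K * Real.exp (c * |x|) := mul_le_mul_of_nonneg_left h1 hKpos.le
    have hsplit : Real.exp (-h * |x|) = Real.exp (-(c * |x|)) * Real.exp (-(c * |x|)) := by
      rw [← Real.exp_add]
      congr 1
      rw [hcdef]; ring
    have hprod : Real.exp (-(c * |x|)) * Real.exp (c * |x|) = 1 := by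
      rw [← Real.exp_add]; simp
    calc Real.exp (-h * |x|) * (1 + |x|)
        = Real.exp (-(c * |x|)) * (Real.exp (-(c * |x|)) * (1 + |x|)) := by
          rw [hsplit]; ring
      _ ≤ Real.exp (-(c * |x|)) * (Real.exp (-(c * |x|)) * (K * Real.exp (c * |x|))) := by
          apply mul_le_mul_of_nonneg_left _ (Real.exp_pos _).le
          exact mul_le_mul_of_nonneg_left he (Real.exp_pos _).le
      _ = K * Real.exp (-(c * |x|)) * (Real.exp (-(c * |x|)) * Real.exp (c * |x|)) := by ring
      _ = K * Real.exp (-(c * |x|)) := by rw [hprod, mul_one]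
  rcases le_or_gt b (1/2) with hb | hb
  · -- easy case : b ≤ 1/2
    have hfg : ∀ x : ℝ, Real.exp (-h * |x|) * (1 + |x|)
        / ‖1 - (b : ℂ) * Complex.exp (Complex.I * (x : ℂ))‖ ^ (1 + δ)
        ≤ (K * 2 ^ (1+δ)) * Real.exp (-(c * |x|)) := by
      intro x
      have hD : (1:ℝ)/2 ≤ ‖1 - (b : ℂ) * Complex.exp (Complex.I * (x : ℂ))‖ :=
        le_trans (by linarith) (hd1 x)
      have hDp : (0:ℝ) < ((1:ℝ)/2) ^ (1 + δ) := Real.rpow_pos_of_pos (by norm_num) _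
      have h1 : ((1:ℝ)/2) ^ (1+δ)
          ≤ ‖1 - (b : ℂ) * Complex.exp (Complex.I * (x : ℂ))‖ ^ (1+δ) :=
        Real.rpow_le_rpow (by norm_num) hD (by linarith)
      have hnum : 0 ≤ Real.exp (-h * |x|) * (1 + |x|) := by
        have := abs_nonneg x; positivity
      calc Real.exp (-h * |x|) * (1 + |x|)
          / ‖1 - (b : ℂ) * Complex.exp (Complex.I * (x : ℂ))‖ ^ (1 + δ)
          ≤ Real.exp (-h * |x|) * (1 + |x|) / ((1:ℝ)/2) ^ (1+δ) :=
            div_le_div_of_nonneg_left hnum hDp h1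
        _ = Real.exp (-h * |x|) * (1 + |x|) * 2 ^ (1+δ) := by
            rw [one_div, Real.inv_rpow (by norm_num : (0:ℝ) ≤ 2), div_eq_mul_inv, inv_inv]
        _ ≤ (K * Real.exp (-(c * |x|))) * 2 ^ (1+δ) :=
            mul_le_mul_of_nonneg_right (hw x) h2pow.le
        _ = (K * 2 ^ (1+δ)) * Real.exp (-(c * |x|)) := by ring
    have hint : Integrable (fun x : ℝ => (K * 2 ^ (1+δ)) * Real.exp (-(c * |x|))) :=
      (aux_integrable_exp_abs hc).const_mul _
    have h2 : (∫ x : ℝ, Real.exp (-h * |x|) * (1 + |x|)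
          / ‖1 - (b : ℂ) * Complex.exp (Complex.I * (x : ℂ))‖ ^ (1 + δ))
        ≤ ∫ x : ℝ, (K * 2 ^ (1+δ)) * Real.exp (-(c * |x|)) :=
      integral_mono_of_nonneg (Filter.Eventually.of_forall hf0) hint
        (Filter.Eventually.of_forall hfg)
    have h3 : (∫ x : ℝ, (K * 2 ^ (1+δ)) * Real.exp (-(c * |x|))) = (K * 2 ^ (1+δ)) * E :=
      MeasureTheory.integral_const_mul _ _
    have h4 : (K * 2 ^ (1+δ)) * E ≤ C := by
      rw [hC]
      nlinarith [h2pow, hKpos, hEnn, ht2]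
    have h5 : C ≤ C / (1 - b) ^ δ := by
      rw [le_div_iff₀ hapow]
      nlinarith [hCpos, hpow_le_one]
    exact le_trans (le_trans h2 (le_of_eq h3)) (le_trans h4 h5)
  · -- main case : 1/2 < b
    have hMpos : ∀ x : ℝ, 0 < max (1 - b) (|Real.sin x| / 2) := fun x => lt_max_of_lt_left ha
    have hMcont : Continuous fun x : ℝ => max (1 - b) (|Real.sin x| / 2) :=
      continuous_const.max ((Real.continuous_sin.abs).div_const 2)
    have hmcont : Continuous fun x : ℝ => (max (1 - b) (|Real.sin x| / 2)) ^ (-(1+δ)) :=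
      hMcont.rpow_const fun x => Or.inl (hMpos x).ne'
    have hmnn : ∀ x : ℝ, 0 ≤ (max (1 - b) (|Real.sin x| / 2)) ^ (-(1+δ)) :=
      fun x => Real.rpow_nonneg (hMpos x).le _
    have hma : ∀ x : ℝ, (max (1 - b) (|Real.sin x| / 2)) ^ (-(1+δ)) ≤ (1 - b) ^ (-(1+δ)) :=
      fun x => Real.rpow_le_rpow_of_nonpos ha (le_max_left _ _) (by linarith)
    have hecont : Continuous fun x : ℝ => Real.exp (-(c * |x|)) := by fun_prop
    have hFint : Integrable (fun x : ℝ =>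
        Real.exp (-(c * |x|)) * (max (1 - b) (|Real.sin x| / 2)) ^ (-(1+δ))) := by
      refine Integrable.mono' ((aux_integrable_exp_abs hc).const_mul ((1 - b) ^ (-(1+δ))))
        (hecont.mul hmcont).aestronglyMeasurable (Filter.Eventually.of_forall fun x => ?_)
      rw [Real.norm_eq_abs, _root_.abs_of_nonneg (mul_nonneg (Real.exp_pos _).le (hmnn x)),
        mul_comm]
      exact mul_le_mul_of_nonneg_right (hma x) (Real.exp_pos _).le
    have hfg : ∀ x : ℝ, Real.exp (-h * |x|) * (1 + |x|)
        / ‖1 - (b : ℂ) * Complex.exp (Complex.I * (x : ℂ))‖ ^ (1 + δ)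
        ≤ K * (Real.exp (-(c * |x|)) * (max (1 - b) (|Real.sin x| / 2)) ^ (-(1+δ))) := by
      intro x
      have hsin : |Real.sin x| / 2 ≤ b * |Real.sin x| := by
        nlinarith [abs_nonneg (Real.sin x)]
      have hM : max (1 - b) (|Real.sin x| / 2)
          ≤ ‖1 - (b : ℂ) * Complex.exp (Complex.I * (x : ℂ))‖ :=
        max_le (hd1 x) (le_trans hsin (hd2 x))
      have h1 : (max (1 - b) (|Real.sin x| / 2)) ^ (1+δ)
          ≤ ‖1 - (b : ℂ) * Complex.exp (Complex.I * (x : ℂ))‖ ^ (1+δ) :=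
        Real.rpow_le_rpow (hMpos x).le hM (by linarith)
      have hnum : 0 ≤ Real.exp (-h * |x|) * (1 + |x|) := by
        have := abs_nonneg x; positivity
      have hMP : (0:ℝ) < (max (1 - b) (|Real.sin x| / 2)) ^ (1+δ) :=
        Real.rpow_pos_of_pos (hMpos x) _
      calc Real.exp (-h * |x|) * (1 + |x|)
          / ‖1 - (b : ℂ) * Complex.exp (Complex.I * (x : ℂ))‖ ^ (1 + δ)
          ≤ Real.exp (-h * |x|) * (1 + |x|) / (max (1 - b) (|Real.sin x| / 2)) ^ (1+δ) :=
            div_le_div_of_nonneg_left hnum hMP h1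
        _ = Real.exp (-h * |x|) * (1 + |x|) * (max (1 - b) (|Real.sin x| / 2)) ^ (-(1+δ)) := by
            rw [Real.rpow_neg (hMpos x).le, div_eq_mul_inv]
        _ ≤ (K * Real.exp (-(c * |x|))) * (max (1 - b) (|Real.sin x| / 2)) ^ (-(1+δ)) :=
            mul_le_mul_of_nonneg_right (hw x) (hmnn x)
        _ = K * (Real.exp (-(c * |x|)) * (max (1 - b) (|Real.sin x| / 2)) ^ (-(1+δ))) := by
            ring
    have h2 : (∫ x : ℝ, Real.exp (-h * |x|) * (1 + |x|)
          / ‖1 - (b : ℂ) * Complex.exp (Complex.I * (x : ℂ))‖ ^ (1 + δ))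
        ≤ ∫ x : ℝ, K * (Real.exp (-(c * |x|)) * (max (1 - b) (|Real.sin x| / 2)) ^ (-(1+δ))) :=
      integral_mono_of_nonneg (Filter.Eventually.of_forall hf0) (hFint.const_mul K)
        (Filter.Eventually.of_forall hfg)
    have h3 : (∫ x : ℝ, K * (Real.exp (-(c * |x|))
          * (max (1 - b) (|Real.sin x| / 2)) ^ (-(1+δ))))
        = K * ∫ x : ℝ, Real.exp (-(c * |x|)) * (max (1 - b) (|Real.sin x| / 2)) ^ (-(1+δ)) :=
      MeasureTheory.integral_const_mul _ _
    have h4 := aux_line (a := 1 - b) (c := c) hδ ha hc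
    have h5 : K * (∫ x : ℝ, Real.exp (-(c * |x|))
          * (max (1 - b) (|Real.sin x| / 2)) ^ (-(1+δ)))
        ≤ K * (Real.exp (c * π) * S * (C₁ * (1 - b) ^ (-δ))) := by
      apply mul_le_mul_of_nonneg_left _ hKpos.le
      refine le_trans h4 (le_of_eq ?_)
      rw [hS, hC₁]
    have h6 : K * (Real.exp (c * π) * S * (C₁ * (1 - b) ^ (-δ)))
        = (K * Real.exp (c * π) * S * C₁) * (1 - b) ^ (-δ) := by ring
    have h7 : (K * Real.exp (c * π) * S * C₁) * (1 - b) ^ (-δ) ≤ C * (1 - b) ^ (-δ) := by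
      apply mul_le_mul_of_nonneg_right _ (Real.rpow_nonneg ha.le _)
      rw [hC]; linarith
    have h8 : C * (1 - b) ^ (-δ) = C / (1 - b) ^ δ := by
      rw [Real.rpow_neg ha.le, div_eq_mul_inv]
    calc (∫ x : ℝ, Real.exp (-h * |x|) * (1 + |x|)
          / ‖1 - (b : ℂ) * Complex.exp (Complex.I * (x : ℂ))‖ ^ (1 + δ))
        ≤ K * ∫ x : ℝ, Real.exp (-(c * |x|))
            * (max (1 - b) (|Real.sin x| / 2)) ^ (-(1+δ)) := le_trans h2 (le_of_eq h3)
      _ ≤ K * (Real.exp (c * π) * S * (C₁ * (1 - b) ^ (-δ))) := h5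
      _ = (K * Real.exp (c * π) * S * C₁) * (1 - b) ^ (-δ) := h6
      _ ≤ C * (1 - b) ^ (-δ) := h7
      _ = C / (1 - b) ^ δ := h8
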